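/- Every lower semi-continuous state D on W(X,G) induces a G-invariant regular premeasure μ_D on the algebra A_0 generated by open sets of X, defined on an open set O = supp(f) by μ_D(O) = D([f]); μ_D is countably additive on A_0, G-invariant, inner regular by closed sets and outer regular by open sets. -/

import Mathlib

open scoped Pointwise NNReal ENNReal

variable {X : Type*} [TopologicalSpace X] {G : Type*} [Group G] [MulAction G X]

/-- The open support of a continuous `ℝ≥0`-valued function. -/
def osupp (f : C(X, ℝ≥0)) : Set X := {x | f x ≠ 0}

/-- Dynamical subequivalence `A ≼ B` for two finite tuples (lists) of subsets of `X`. -/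
def SetSubeq (G : Type*) [Group G] [MulAction G X] (A B : List (Set X)) : Prop :=
  ∀ F : Fin A.length → Set X,
    (∀ i, IsClosed (F i) ∧ F i ⊆ A.get i) →
    ∃ (J : Fin A.length → ℕ)
      (U : (i : Fin A.length) → Fin (J i) → Set X)
      (s : (i : Fin A.length) → Fin (J i) → G)
      (k : (i : Fin A.length) → Fin (J i) → Fin B.length),
      (∀ i j, IsOpen (U i j)) ∧
      (∀ i, F i ⊆ ⋃ j, U i j) ∧
      (∀ i j, (s i j) • U i j ⊆ B.get (k i j)) ∧
      (∀ (p q : Σ i : Fin A.length, Fin (J i)), p ≠ q → k p.1 p.2 = k q.1 q.2 →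
        Disjoint ((s p.1 p.2) • U p.1 p.2) ((s q.1 q.2) • U q.1 q.2))

/-- Dynamical subequivalence `a ≼ b` for tuples of nonnegative continuous functions. -/
def DynSubeq (G : Type*) [Group G] [MulAction G X] (a b : List C(X, ℝ≥0)) : Prop :=
  SetSubeq G (a.map osupp) (b.map osupp)

/-- The entrywise cut-down `(f - ε)₊`. -/
noncomputable def cutFun (f : C(X, ℝ≥0)) (ε : ℝ≥0) : C(X, ℝ≥0) :=
  ⟨fun x => f x - ε, f.continuous.sub continuous_const⟩

noncomputable def cutList (a : List C(X, ℝ≥0)) (ε : ℝ≥0) : List C(X, ℝ≥0) := a.map (cutFun · ε)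

/-- Membership in the algebra of sets generated by the open sets of `X`. -/
def InAlg (X : Type*) [TopologicalSpace X] (s : Set X) : Prop :=
  s ∈ MeasureTheory.generateSetAlgebra {t : Set X | IsOpen t}

/-- A `G`-invariant regular premeasure on the algebra generated by the open sets. -/
structure InvRegPremeasure (X : Type*) [TopologicalSpace X] (G : Type*) [Group G]
    [MulAction G X] where
  m : Set X → ℝ≥0∞
  junk : ∀ s : Set X, ¬ InAlg X s → m s = 0
  empty' : m ∅ = 0
  countably_additive : ∀ A : ℕ → Set X, (∀ n, InAlg X (A n)) →
    Pairwise (Function.onFun Disjoint A) → InAlg X (⋃ n, A n) →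
    m (⋃ n, A n) = ∑' n, m (A n)
  invariant : ∀ (g : G) (s : Set X), InAlg X s → m (g • s) = m s
  inner_regular : ∀ s : Set X, InAlg X s →
    m s = ⨆ (F : Set X) (_ : IsCompact F ∧ F ⊆ s), m F
  outer_regular : ∀ s : Set X, InAlg X s →
    m s = ⨅ (O : Set X) (_ : IsOpen O ∧ s ⊆ O), m O

/-- A state on the generalized type semigroup `W(X, G)`, described at the level of
`K(X, G)`: a function on tuples which is monotone for `≼`, additive for concatenation,
and vanishes on the empty tuple. -/
structure DynState (X : Type*) [TopologicalSpace X] (G : Type*) [Group G]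
    [MulAction G X] where
  toFun : List C(X, ℝ≥0) → ℝ≥0∞
  mono : ∀ a b, DynSubeq G a b → toFun a ≤ toFun b
  additive : ∀ a b, toFun (a ++ b) = toFun a + toFun b
  zero' : toFun [] = 0

/-- Lower semicontinuity of a state. -/
def DynState.LSC (D : DynState X G) : Prop :=
  ∀ a, D.toFun a = ⨆ (ε : ℝ≥0) (_ : 0 < ε), D.toFun (cutList a ε)

section Aux

open MeasureTheory Set

variable {X : Type*} [MetricSpace X] {G : Type*} [Group G] [MulAction G X]

lemma osupp_isOpen (f : C(X, ℝ≥0)) : IsOpen (osupp f) := by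
  have h : osupp f = f ⁻¹' ({0}ᶜ) := by ext x; simp [osupp]
  rw [h]
  exact isOpen_compl_singleton.preimage f.continuous

lemma finOne_elim {n : ℕ} (h : n = 1) (a b : Fin n) : a = b := by
  subst h; omega

open scoped Classical in
/-- A canonical continuous function with open support `O`. -/
noncomputable def suppFun (O : Set X) : C(X, ℝ≥0) :=
  ⟨fun x => Real.toNNReal (Metric.infDist x Oᶜ) + (if Oᶜ = ∅ then 1 else 0),
    (continuous_real_toNNReal.comp (Metric.continuous_infDist_pt Oᶜ)).add continuous_const⟩

lemma osupp_suppFun {O : Set X} (hO : IsOpen O) : osupp (suppFun O) = O := by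
  by_cases h : Oᶜ = ∅
  · have hO' : O = univ := by
      rw [← compl_compl O, h, compl_empty]
    ext x
    simp [osupp, suppFun, h, hO']
  · have hne : Oᶜ.Nonempty := nonempty_iff_ne_empty.2 h
    ext x
    simp only [osupp, suppFun, h, ContinuousMap.coe_mk, mem_setOf_eq, add_zero, if_false]
    rw [Ne, Real.toNNReal_eq_zero, not_le,
      ← hO.isClosed_compl.notMem_iff_infDist_pos hne, notMem_compl_iff]

lemma iUnion_list_get (L : List (Set X)) :
    (⋃ j : Fin L.length, L.get j) = ⋃ s ∈ L, s := by
  ext x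
  simp only [mem_iUnion, exists_prop, List.mem_iff_get]
  constructor
  · rintro ⟨j, hj⟩; exact ⟨L.get j, ⟨j, rfl⟩, hj⟩
  · rintro ⟨s, ⟨j, rfl⟩, hx⟩; exact ⟨j, hx⟩

lemma setSubeq_of_cover {S : Set X} {L : List (Set X)}
    (hL : ∀ s ∈ L, IsOpen s)
    (h : S ⊆ ⋃ s ∈ L, s) : SetSubeq G [S] L := by
  intro F hF
  refine ⟨fun _ => L.length, fun _ j => L.get j, fun _ _ => 1, fun _ j => j,
    fun i j => hL _ (L.get_mem _), fun i => ?_, fun i j => by rw [one_smul], ?_⟩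
  · refine (hF i).2.trans ?_
    have hi : ([S].get i : Set X) = S := by simp only [List.get_eq_getElem, List.getElem_singleton]
    rw [hi]
    exact h.trans (by rw [iUnion_list_get])
  · rintro ⟨i, j⟩ ⟨i', j'⟩ hne hk
    obtain rfl : i = i' := finOne_elim rfl i i'
    obtain rfl : j = j' := hk
    exact absurd rfl hne

lemma setSubeq_pair {S₁ S₂ T : Set X} (h₁ : IsOpen S₁) (h₂ : IsOpen S₂)
    (hd : Disjoint S₁ S₂) (hs₁ : S₁ ⊆ T) (hs₂ : S₂ ⊆ T) : SetSubeq G [S₁, S₂] [T] := by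
  intro F hF
  refine ⟨fun _ => 1, fun i _ => [S₁, S₂].get i, fun _ _ => 1, fun _ _ => ⟨0, Nat.one_pos⟩,
    ?_, ?_, ?_, ?_⟩
  · intro i j
    fin_cases i
    · exact h₁
    · exact h₂
  · intro i
    refine (hF i).2.trans ?_
    intro x hx
    exact mem_iUnion.2 ⟨⟨0, Nat.one_pos⟩, hx⟩
  · intro i j
    rw [one_smul]
    fin_cases i
    · exact hs₁
    · exact hs₂
  · rintro ⟨i, j⟩ ⟨i', j'⟩ hne hk
    obtain rfl : j = j' := finOne_elim rfl j j'
    have hii : i ≠ i' := by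
      rintro rfl
      exact hne rfl
    rw [one_smul, one_smul]
    fin_cases i <;> fin_cases i' <;>
      first
        | exact absurd rfl hii
        | exact hd
        | exact hd.symm

lemma setSubeq_smul {S T : Set X} (hS : IsOpen S) (g : G) (h : g • S ⊆ T) :
    SetSubeq G [S] [T] := by
  intro F hF
  refine ⟨fun _ => 1, fun _ _ => S, fun _ _ => g, fun _ _ => ⟨0, Nat.one_pos⟩,
    fun _ _ => hS, fun i => ?_, fun _ _ => h.trans (by simp), ?_⟩
  · refine (hF i).2.trans ?_
    simp only [List.get_eq_getElem, List.getElem_singleton]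
    intro x hx
    exact mem_iUnion.2 ⟨⟨0, Nat.one_pos⟩, hx⟩
  · rintro ⟨i, j⟩ ⟨i', j'⟩ hne hk
    obtain rfl : i = i' := finOne_elim rfl i i'
    obtain rfl : j = j' := finOne_elim rfl j j'
    exact absurd rfl hne

end Aux
section DAux

open MeasureTheory Set

variable {X : Type*} [MetricSpace X] [CompactSpace X] {G : Type*} [Group G] [MulAction G X]

lemma D_cons (D : DynState X G) (g : C(X, ℝ≥0)) (t : List C(X, ℝ≥0)) :
    D.toFun (g :: t) = D.toFun [g] + D.toFun t := D.additive [g] t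

lemma D_sum (D : DynState X G) : ∀ l : List C(X, ℝ≥0),
    D.toFun l = (l.map fun g => D.toFun [g]).sum := by
  intro l
  induction l with
  | nil => simp [D.zero']
  | cons g t ih => rw [List.map_cons, List.sum_cons, D_cons, ih]

lemma D_le_of_cover (D : DynState X G) {f : C(X, ℝ≥0)} {gs : List C(X, ℝ≥0)}
    (h : osupp f ⊆ ⋃ g ∈ gs, osupp g) : D.toFun [f] ≤ D.toFun gs := by
  refine D.mono _ _ ?_
  show SetSubeq G [osupp f] (gs.map osupp)
  apply setSubeq_of_cover
  · intro s hs
    obtain ⟨g, _, rfl⟩ := List.mem_map.1 hs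
    exact osupp_isOpen g
  · refine h.trans ?_
    intro x hx
    simp only [mem_iUnion, exists_prop, List.mem_map] at hx ⊢
    obtain ⟨g, hg, hxg⟩ := hx
    exact ⟨osupp g, ⟨g, hg, rfl⟩, hxg⟩

lemma D_osupp_empty (D : DynState X G) {f : C(X, ℝ≥0)} (h : osupp f = ∅) :
    D.toFun [f] = 0 := by
  have h1 : D.toFun [f] ≤ D.toFun [] := D_le_of_cover D (by simp [h])
  rw [D.zero'] at h1
  exact le_antisymm h1 zero_le

lemma D_mono_single (D : DynState X G) {f h : C(X, ℝ≥0)} (hsub : osupp f ⊆ osupp h) :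
    D.toFun [f] ≤ D.toFun [h] :=
  D_le_of_cover D (by simpa using hsub)

lemma D_pair_le (D : DynState X G) {f₁ f₂ h : C(X, ℝ≥0)} (hd : Disjoint (osupp f₁) (osupp f₂))
    (h₁ : osupp f₁ ⊆ osupp h) (h₂ : osupp f₂ ⊆ osupp h) :
    D.toFun [f₁] + D.toFun [f₂] ≤ D.toFun [h] := by
  have hadd : D.toFun [f₁, f₂] = D.toFun [f₁] + D.toFun [f₂] := D.additive [f₁] [f₂]
  rw [← hadd]
  refine D.mono _ _ ?_
  show SetSubeq G [osupp f₁, osupp f₂] [osupp h]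
  exact setSubeq_pair (osupp_isOpen _) (osupp_isOpen _) hd h₁ h₂

lemma D_smul_le (D : DynState X G) {f h : C(X, ℝ≥0)} (g : G) (hsub : g • osupp f ⊆ osupp h) :
    D.toFun [f] ≤ D.toFun [h] := by
  refine D.mono _ _ ?_
  show SetSubeq G [osupp f] [osupp h]
  exact setSubeq_smul (osupp_isOpen _) g hsub

/-- The value of the induced set function on an open set. -/
noncomputable def nuD (D : DynState X G) (O : Set X) : ℝ≥0∞ := D.toFun [suppFun O]

lemma nuD_mono (D : DynState X G) {O O' : Set X} (hO : IsOpen O) (hO' : IsOpen O')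
    (h : O ⊆ O') : nuD D O ≤ nuD D O' := by
  refine D_mono_single D ?_
  rw [osupp_suppFun hO, osupp_suppFun hO']
  exact h

lemma nuD_empty (D : DynState X G) : nuD D ∅ = 0 :=
  D_osupp_empty D (osupp_suppFun isOpen_empty)

lemma nuD_pair (D : DynState X G) {O₁ O₂ O : Set X} (h₁ : IsOpen O₁) (h₂ : IsOpen O₂)
    (hO : IsOpen O) (hd : Disjoint O₁ O₂) (hs₁ : O₁ ⊆ O) (hs₂ : O₂ ⊆ O) :
    nuD D O₁ + nuD D O₂ ≤ nuD D O := by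
  refine D_pair_le D ?_ ?_ ?_ <;>
    simp only [osupp_suppFun h₁, osupp_suppFun h₂, osupp_suppFun hO]
  · exact hd
  · exact hs₁
  · exact hs₂

lemma list_map_toList_sum (t : Finset ℕ) (h : ℕ → ℝ≥0∞) :
    (t.toList.map h).sum = ∑ n ∈ t, h n := by
  rw [Finset.sum]
  conv_rhs => rw [← Multiset.coe_toList t.val]
  rw [Multiset.map_coe, Multiset.sum_coe]
  rfl

/-- Countable subadditivity of `D` with respect to open covers of the support. -/
lemma D_countable_subadd (D : DynState X G) (hD : D.LSC) (f : C(X, ℝ≥0)) (O : ℕ → Set X)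
    (hO : ∀ n, IsOpen (O n)) (hsub : osupp f ⊆ ⋃ n, O n) :
    D.toFun [f] ≤ ∑' n, nuD D (O n) := by
  rw [hD [f]]
  refine iSup₂_le fun ε hε => ?_
  have hcut : cutList [f] ε = [cutFun f ε] := rfl
  rw [hcut]
  set C := closure (osupp (cutFun f ε)) with hC
  have hCf : C ⊆ {x | ε ≤ f x} := by
    refine closure_minimal ?_ (isClosed_le continuous_const f.continuous)
    intro x hx
    have hx' : ¬ f x - ε = 0 := hx
    rw [tsub_eq_zero_iff_le] at hx'
    exact (not_le.1 hx').le
  have hCsub : C ⊆ ⋃ n, O n := by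
    refine hCf.trans (fun x hx => hsub ?_)
    intro h0
    rw [mem_setOf_eq, h0] at hx
    exact hε.not_ge hx
  have hCcomp : IsCompact C := isClosed_closure.isCompact
  obtain ⟨t, ht⟩ := hCcomp.elim_finite_subcover O hO hCsub
  have h1 : D.toFun [cutFun f ε] ≤ D.toFun (t.toList.map fun n => suppFun (O n)) := by
    apply D_le_of_cover
    refine subset_closure.trans (ht.trans ?_)
    intro x hx
    simp only [mem_iUnion, exists_prop] at hx ⊢
    obtain ⟨n, hnt, hxn⟩ := hx
    refine ⟨suppFun (O n), List.mem_map.2 ⟨n, Finset.mem_toList.2 hnt, rfl⟩, ?_⟩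
    rw [osupp_suppFun (hO n)]
    exact hxn
  have h2 : D.toFun (t.toList.map fun n => suppFun (O n)) = ∑ n ∈ t, nuD D (O n) := by
    rw [D_sum, List.map_map, ← list_map_toList_sum]
    rfl
  rw [h2] at h1
  exact h1.trans (ENNReal.sum_le_tsum t)

end DAux
section MuAux

open MeasureTheory Set

variable {X : Type*} [MetricSpace X] [CompactSpace X] {G : Type*} [Group G] [MulAction G X]

open scoped Classical in
/-- The generating set function for the induced outer measure. -/
noncomputable def muFn (D : DynState X G) : Set X → ℝ≥0∞ :=
  fun s => if IsOpen s then nuD D s else ⊤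

lemma muFn_empty (D : DynState X G) : muFn D (∅ : Set X) = 0 := by
  rw [muFn]
  classical
  rw [if_pos isOpen_empty, nuD_empty]

/-- The outer measure induced by a state. -/
noncomputable def muD (D : DynState X G) : MeasureTheory.OuterMeasure X :=
  MeasureTheory.OuterMeasure.ofFunction (muFn D) (muFn_empty D)

lemma muD_le_nuD (D : DynState X G) {O : Set X} (hO : IsOpen O) : muD D O ≤ nuD D O := by
  classical
  exact (MeasureTheory.OuterMeasure.ofFunction_le O).trans_eq (if_pos hO)

lemma muD_eq_iInf (D : DynState X G) (hD : D.LSC) (s : Set X) :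
    muD D s = ⨅ (O : Set X) (_ : IsOpen O ∧ s ⊆ O), nuD D O := by
  classical
  apply le_antisymm
  · refine le_iInf₂ fun O hO => ?_
    exact ((muD D).mono hO.2).trans (muD_le_nuD D hO.1)
  · rw [muD, MeasureTheory.OuterMeasure.ofFunction_apply]
    refine le_iInf₂ fun t ht => ?_
    by_cases hop : ∀ n, IsOpen (t n)
    · refine iInf₂_le_of_le (⋃ n, t n) ⟨isOpen_iUnion hop, ht⟩ ?_
      have h1 : nuD D (⋃ n, t n) ≤ ∑' n, nuD D (t n) := by
        refine D_countable_subadd D hD (suppFun (⋃ n, t n)) t hop ?_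
        rw [osupp_suppFun (isOpen_iUnion hop)]
      refine h1.trans (le_of_eq (tsum_congr fun n => ?_))
      rw [muFn, if_pos (hop n)]
    · push_neg at hop
      obtain ⟨n, hn⟩ := hop
      refine le_trans ?_ (ENNReal.le_tsum n)
      rw [muFn, if_neg hn]
      exact le_top

lemma muD_open (D : DynState X G) (hD : D.LSC) {O : Set X} (hO : IsOpen O) :
    muD D O = nuD D O := by
  refine le_antisymm (muD_le_nuD D hO) ?_
  rw [muD_eq_iInf D hD]
  exact le_iInf₂ fun O' hO' => nuD_mono D hO hO'.1 hO'.2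

lemma muD_isMetric (D : DynState X G) (hD : D.LSC) : (muD D).IsMetric := by
  intro s t hst
  refine le_antisymm (measure_union_le (μ := muD D) s t) ?_
  obtain ⟨r, hr0, hr⟩ := hst
  set r' : ℝ≥0∞ := min r 1 with hr'def
  have hr'0 : r' ≠ 0 := by
    simp only [hr'def, ne_eq, min_eq_iff, not_or]
    simp [hr0]
  set Vs := {x : X | EMetric.infEdist x s < r' / 2} with hVs
  set Vt := {x : X | EMetric.infEdist x t < r' / 2} with hVt
  have hVso : IsOpen Vs := by
    have : Vs = (fun x => EMetric.infEdist x s) ⁻¹' Iio (r' / 2) := rfl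
    rw [this]
    exact isOpen_Iio.preimage EMetric.continuous_infEdist
  have hVto : IsOpen Vt := by
    have : Vt = (fun x => EMetric.infEdist x t) ⁻¹' Iio (r' / 2) := rfl
    rw [this]
    exact isOpen_Iio.preimage EMetric.continuous_infEdist
  have hss : s ⊆ Vs := fun x hx => by
    show EMetric.infEdist x s < r' / 2
    rw [show EMetric.infEdist x _ = 0 from Metric.infEDist_zero_of_mem hx]
    exact ENNReal.half_pos hr'0
  have hts : t ⊆ Vt := fun x hx => by
    show EMetric.infEdist x t < r' / 2
    rw [show EMetric.infEdist x _ = 0 from Metric.infEDist_zero_of_mem hx]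
    exact ENNReal.half_pos hr'0
  have hdisj : Disjoint Vs Vt := by
    rw [Set.disjoint_left]
    intro x hxs hxt
    obtain ⟨y, hy, hxy⟩ := EMetric.infEdist_lt_iff.1 hxs
    obtain ⟨z, hz, hxz⟩ := EMetric.infEdist_lt_iff.1 hxt
    have h1 : edist y z < r' := by
      calc edist y z ≤ edist y x + edist x z := edist_triangle y x z
        _ < r' / 2 + r' / 2 := ENNReal.add_lt_add (by rwa [edist_comm]) hxz
        _ = r' := ENNReal.add_halves r'
    exact absurd (hr y hy z hz) (h1.trans_le (min_le_left r 1)).not_ge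
  rw [muD_eq_iInf D hD (s ∪ t)]
  refine le_iInf₂ fun O hO => ?_
  have h1 : muD D s ≤ nuD D (O ∩ Vs) := by
    rw [muD_eq_iInf D hD]
    exact iInf₂_le (O ∩ Vs) ⟨hO.1.inter hVso, subset_inter (subset_union_left.trans hO.2) hss⟩
  have h2 : muD D t ≤ nuD D (O ∩ Vt) := by
    rw [muD_eq_iInf D hD]
    exact iInf₂_le (O ∩ Vt) ⟨hO.1.inter hVto, subset_inter (subset_union_right.trans hO.2) hts⟩
  calc muD D s + muD D t ≤ nuD D (O ∩ Vs) + nuD D (O ∩ Vt) := add_le_add h1 h2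
    _ ≤ nuD D O := nuD_pair D (hO.1.inter hVso) (hO.1.inter hVto) hO.1
        (hdisj.mono inter_subset_right inter_subset_right) inter_subset_left inter_subset_left

lemma smul_set_isOpen (hG : ∀ g : G, Continuous fun x : X => g • x) {g : G} {O : Set X}
    (hO : IsOpen O) : IsOpen (g • O) := by
  have h : g • O = (fun x : X => g⁻¹ • x) ⁻¹' O := by
    ext x
    simp [Set.mem_smul_set_iff_inv_smul_mem]
  rw [h]
  exact hO.preimage (hG g⁻¹)

lemma nuD_smul (D : DynState X G) (hG : ∀ g : G, Continuous fun x : X => g • x) (g : G)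
    {O : Set X} (hO : IsOpen O) : nuD D (g • O) = nuD D O := by
  refine le_antisymm ?_ ?_
  · refine D_smul_le D g⁻¹ ?_
    rw [osupp_suppFun (smul_set_isOpen hG hO), osupp_suppFun hO, inv_smul_smul]
  · refine D_smul_le D g ?_
    rw [osupp_suppFun (smul_set_isOpen hG hO), osupp_suppFun hO]

lemma muD_smul_le (D : DynState X G) (hD : D.LSC) (hG : ∀ g : G, Continuous fun x : X => g • x)
    (g : G) (s : Set X) : muD D (g • s) ≤ muD D s := by
  rw [muD_eq_iInf D hD, muD_eq_iInf D hD]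
  refine le_iInf₂ fun O hO => ?_
  refine iInf₂_le_of_le (g • O) ⟨smul_set_isOpen hG hO.1, Set.smul_set_mono hO.2⟩ ?_
  exact le_of_eq (nuD_smul D hG g hO.1)

lemma muD_smul (D : DynState X G) (hD : D.LSC) (hG : ∀ g : G, Continuous fun x : X => g • x)
    (g : G) (s : Set X) : muD D (g • s) = muD D s := by
  refine le_antisymm (muD_smul_le D hD hG g s) ?_
  have h1 : muD D (g⁻¹ • g • s) ≤ muD D (g • s) := muD_smul_le D hD hG g⁻¹ (g • s)
  rwa [inv_smul_smul] at h1

end MuAux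

section AlgAux

open MeasureTheory Set

variable {X : Type*} [TopologicalSpace X] {G : Type*} [Group G] [MulAction G X]

lemma inAlg_measurableSet {s : Set X} (h : InAlg X s) : MeasurableSet[borel X] s := by
  induction h with
  | base t ht => exact MeasurableSpace.measurableSet_generateFrom ht
  | empty => exact @MeasurableSet.empty _ (borel X)
  | compl t _ iht => exact iht.compl
  | union t u _ _ iht ihu => exact iht.union ihu

lemma inAlg_empty : InAlg X (∅ : Set X) :=
  MeasureTheory.generateSetAlgebra.empty

lemma inAlg_open {s : Set X} (hs : IsOpen s) : InAlg X s :=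
  MeasureTheory.generateSetAlgebra.base s hs

lemma inAlg_closed {s : Set X} (hs : IsClosed s) : InAlg X s := by
  have h : s = (sᶜ)ᶜ := (compl_compl s).symm
  rw [h]
  exact MeasureTheory.generateSetAlgebra.compl _ (inAlg_open hs.isOpen_compl)

lemma inAlg_smul (hG : ∀ g : G, Continuous fun x : X => g • x) (g : G) {s : Set X}
    (h : InAlg X s) : InAlg X (g • s) := by
  induction h with
  | base t ht =>
      refine MeasureTheory.generateSetAlgebra.base _ ?_
      have h' : g • t = (fun x : X => g⁻¹ • x) ⁻¹' t := by
        ext x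
        simp [Set.mem_smul_set_iff_inv_smul_mem]
      rw [h']
      exact ht.preimage (hG g⁻¹)
  | empty =>
      rw [Set.smul_set_empty]
      exact MeasureTheory.generateSetAlgebra.empty
  | compl t _ iht =>
      rw [Set.smul_set_compl]
      exact MeasureTheory.generateSetAlgebra.compl _ iht
  | union t u _ _ iht ihu =>
      rw [Set.smul_set_union]
      exact MeasureTheory.generateSetAlgebra.union _ _ iht ihu

end AlgAux

section FsigmaAux

open MeasureTheory Set

variable {X : Type*} [MetricSpace X]

/-- A set is `Fσ` if it is a countable union of closed sets. -/
def IsFsigma (s : Set X) : Prop := ∃ f : ℕ → Set X, (∀ n, IsClosed (f n)) ∧ (⋃ n, f n) = s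

lemma isFsigma_closed {s : Set X} (hs : IsClosed s) : IsFsigma s :=
  ⟨fun _ => s, fun _ => hs, iUnion_const s⟩

lemma isFsigma_open {O : Set X} (hO : IsOpen O) : IsFsigma O := by
  refine ⟨fun n => {x | (n : ℝ≥0∞)⁻¹ ≤ EMetric.infEdist x Oᶜ}, fun n => ?_, ?_⟩
  · show IsClosed {x : X | (n : ℝ≥0∞)⁻¹ ≤ EMetric.infEdist x Oᶜ}
    have h : {x : X | (n : ℝ≥0∞)⁻¹ ≤ EMetric.infEdist x Oᶜ}
        = (fun x => EMetric.infEdist x Oᶜ) ⁻¹' Ici ((n : ℝ≥0∞)⁻¹) := rfl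
    rw [h]
    exact isClosed_Ici.preimage EMetric.continuous_infEdist
  · ext x
    simp only [mem_iUnion, mem_setOf_eq]
    constructor
    · rintro ⟨n, hn⟩
      by_contra hxO
      rw [show EMetric.infEdist x Oᶜ = 0 from Metric.infEDist_zero_of_mem (mem_compl hxO), le_zero_iff,
        ENNReal.inv_eq_zero] at hn
      exact ENNReal.natCast_ne_top n hn
    · intro hx
      have hx' : x ∉ closure Oᶜ := by
        rw [hO.isClosed_compl.closure_eq]
        exact fun h => h hx
      have hpos : EMetric.infEdist x Oᶜ ≠ 0 := by
        intro h0
        exact hx' (EMetric.mem_closure_iff_infEdist_zero.2 h0)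
      obtain ⟨n, hn⟩ := ENNReal.exists_inv_nat_lt hpos
      exact ⟨n, hn.le⟩

lemma isFsigma_union {s t : Set X} (hs : IsFsigma s) (ht : IsFsigma t) : IsFsigma (s ∪ t) := by
  obtain ⟨f, hf, hfu⟩ := hs
  obtain ⟨g, hg, hgu⟩ := ht
  exact ⟨fun n => f n ∪ g n, fun n => (hf n).union (hg n),
    by rw [iUnion_union_distrib, hfu, hgu]⟩

lemma isFsigma_inter {s t : Set X} (hs : IsFsigma s) (ht : IsFsigma t) : IsFsigma (s ∩ t) := by
  obtain ⟨f, hf, hfu⟩ := hs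
  obtain ⟨g, hg, hgu⟩ := ht
  refine ⟨fun n => f n.unpair.1 ∩ g n.unpair.2, fun n => (hf _).inter (hg _), ?_⟩
  ext x
  simp only [mem_iUnion, mem_inter_iff, ← hfu, ← hgu]
  constructor
  · rintro ⟨n, hxf, hxg⟩
    exact ⟨⟨_, hxf⟩, ⟨_, hxg⟩⟩
  · rintro ⟨⟨i, hxf⟩, ⟨j, hxg⟩⟩
    exact ⟨Nat.pair i j, by rwa [Nat.unpair_pair], by rwa [Nat.unpair_pair]⟩

lemma inAlg_isFsigma {s : Set X} (h : InAlg X s) : IsFsigma s := by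
  have h2 : IsFsigma s ∧ IsFsigma sᶜ := by
    induction h with
    | base t ht => exact ⟨isFsigma_open ht, isFsigma_closed ht.isClosed_compl⟩
    | empty =>
        exact ⟨isFsigma_closed isClosed_empty,
          by rw [compl_empty]; exact isFsigma_closed isClosed_univ⟩
    | compl t _ iht => exact ⟨iht.2, by rw [compl_compl]; exact iht.1⟩
    | union t u _ _ iht ihu =>
        exact ⟨isFsigma_union iht.1 ihu.1,
          by rw [compl_union]; exact isFsigma_inter iht.2 ihu.2⟩
  exact h2.1

end FsigmaAux
/-- **Lemma 3.6.** Every lower semi-continuous state `D` on `W(X, G)` induces a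
`G`-invariant regular premeasure `μ_D` on the algebra generated by the open sets of `X`,
with `μ_D(supp f) = D([f])` for every `f ∈ C(X)₊`.  (The structure `InvRegPremeasure`
records countable additivity on the algebra, `G`-invariance, inner regularity by
compact (= closed) sets and outer regularity by open sets.) -/
theorem premeasure_of_lscState {X : Type*} [TopologicalSpace X] [CompactSpace X]
    [T2Space X] [TopologicalSpace.MetrizableSpace X]
    {G : Type*} [Group G] [MulAction G X]
    (hG : ∀ g : G, Continuous fun x : X => g • x)
    (D : DynState X G) (hD : D.LSC) :
    ∃ μ : InvRegPremeasure X G, ∀ f : C(X, ℝ≥0), μ.m (osupp f) = D.toFun [f] := by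
  classical
  letI : MetricSpace X := TopologicalSpace.metrizableSpaceMetric X
  letI : MeasurableSpace X := borel X
  set μ := muD D with hμdef
  have hmetric : μ.IsMetric := muD_isMetric D hD
  have hcar : borel X ≤ μ.caratheodory := hmetric.borel_le_caratheodory
  have hmeas : ∀ s : Set X, InAlg X s → @MeasurableSet X μ.caratheodory s :=
    fun s hs => hcar _ (inAlg_measurableSet hs)
  set M : MeasureTheory.Measure X := μ.toMeasure hcar with hMdef
  have hMeq : ∀ s : Set X, InAlg X s → M s = μ s :=
    fun s hs => MeasureTheory.toMeasure_apply μ hcar (inAlg_measurableSet hs)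
  refine ⟨⟨fun s => if InAlg X s then μ s else 0, fun s hs => if_neg hs, ?_, ?_, ?_, ?_, ?_⟩,
    ?_⟩
  · -- empty
    beta_reduce
    rw [if_pos inAlg_empty]
    exact MeasureTheory.measure_empty
  · -- countable additivity
    intro A hA hdis hU
    beta_reduce
    rw [if_pos hU]
    have h1 : μ (⋃ n, A n) = ∑' n, μ (A n) :=
      μ.iUnion_eq_of_caratheodory (fun n => hmeas _ (hA n)) hdis
    rw [h1]
    exact tsum_congr fun n => (if_pos (hA n)).symm
  · -- invariance
    intro g s hs
    beta_reduce
    rw [if_pos (inAlg_smul hG g hs), if_pos hs]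
    exact muD_smul D hD hG g s
  · -- inner regularity
    intro s hs
    beta_reduce
    rw [if_pos hs]
    apply le_antisymm
    · obtain ⟨fseq, hfcl, hfu⟩ := inAlg_isFsigma hs
      have hacc : μ s = ⨆ n, M (Set.accumulate fseq n) := by
        rw [← hMeq s hs]
        conv_lhs => rw [← hfu]
        exact MeasureTheory.measure_iUnion_eq_iSup_accumulate
      rw [hacc]
      refine iSup_le fun n => ?_
      have hclosed : IsClosed (Set.accumulate fseq n) := by
        rw [Set.accumulate_def]
        exact (Set.finite_Iic n).isClosed_biUnion (fun i _ => hfcl i)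
      have hsub : Set.accumulate fseq n ⊆ s := by
        rw [← hfu, Set.accumulate_def]
        exact Set.iUnion₂_subset fun i _ => Set.subset_iUnion fseq i
      rw [hMeq _ (inAlg_closed hclosed)]
      refine le_iSup₂_of_le (Set.accumulate fseq n) ⟨hclosed.isCompact, hsub⟩ ?_
      rw [if_pos (inAlg_closed hclosed)]
    · refine iSup₂_le fun F hF => ?_
      rw [if_pos (inAlg_closed hF.1.isClosed)]
      exact μ.mono hF.2
  · -- outer regularity
    intro s hs
    beta_reduce
    rw [if_pos hs, muD_eq_iInf D hD s]
    apply le_antisymm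
    · refine le_iInf₂ fun O hO => ?_
      rw [if_pos (inAlg_open hO.1), muD_open D hD hO.1]
      exact iInf₂_le O hO
    · refine le_iInf₂ fun O hO => ?_
      refine iInf₂_le_of_le O hO ?_
      rw [if_pos (inAlg_open hO.1), muD_open D hD hO.1]
  · -- value on open supports
    intro f
    show (if InAlg X (osupp f) then μ (osupp f) else 0) = D.toFun [f]
    rw [if_pos (inAlg_open (osupp_isOpen f)), hμdef, muD_open D hD (osupp_isOpen f)]
    show D.toFun [suppFun (osupp f)] = D.toFun [f]
    refine le_antisymm (D_mono_single D ?_) (D_mono_single D ?_)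
    · rw [osupp_suppFun (osupp_isOpen f)]
    · rw [osupp_suppFun (osupp_isOpen f)]
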